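/- Let K be a compact metric space and f : K → ℂ a bounded function. Then f belongs to D(K) if and only if the transfinite oscillation osc_α f is a bounded function for every countable ordinal α. -/

import Mathlib

open Filter Topology

section DKdefs
variable {K : Type*} [MetricSpace K] [CompactSpace K]

/-- A bounded lower semicontinuous real function. -/
def BddLSC (u : K → ℝ) : Prop := LowerSemicontinuous u ∧ ∃ M : ℝ, ∀ x, |u x| ≤ M

/-- `f ∈ D(K)`: `f = (u₁ - u₂) + i(u₃ - u₄)` with the `uᵢ` bounded lower semicontinuous. -/
def MemDK (f : K → ℂ) : Prop :=
  ∃ u₁ u₂ u₃ u₄ : K → ℝ, BddLSC u₁ ∧ BddLSC u₂ ∧ BddLSC u₃ ∧ BddLSC u₄ ∧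
    ∀ x, f x = ((u₁ x - u₂ x : ℝ) : ℂ) + Complex.I * ((u₃ x - u₄ x : ℝ) : ℂ)

/-- `f ∈ D(K)` for real `f`: a difference of bounded lower semicontinuous functions. -/
def MemDKReal (f : K → ℝ) : Prop :=
  ∃ u₁ u₂ : K → ℝ, BddLSC u₁ ∧ BddLSC u₂ ∧ ∀ x, f x = u₁ x - u₂ x

/-- Upper semicontinuous envelope `Ug(x) = limsup_{y → x} g(y)` (non-exclusive limsup). -/
noncomputable def uscEnv (g : K → EReal) : K → EReal := fun x => limsup g (𝓝 x)

/-- The transfinite oscillations `osc_β f` of a complex-valued function. -/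
noncomputable def oscOrd (f : K → ℂ) (β : Ordinal) : K → EReal :=
  Ordinal.limitRecOn β (fun _ => (0 : EReal))
    (fun _ ih => uscEnv fun x =>
      limsup (fun y => ((‖f y - f x‖ : ℝ) : EReal) + ih y) (𝓝 x))
    (fun β _ ih => uscEnv fun x => ⨆ (α : Ordinal) (h : α < β), ih α h x)

/-- The transfinite oscillations `osc_β f` of a real-valued function. -/
noncomputable def oscOrdR (f : K → ℝ) (β : Ordinal) : K → EReal :=
  Ordinal.limitRecOn β (fun _ => (0 : EReal))
    (fun _ ih => uscEnv fun x =>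
      limsup (fun y => ((|f y - f x| : ℝ) : EReal) + ih y) (𝓝 x))
    (fun β _ ih => uscEnv fun x => ⨆ (α : Ordinal) (h : α < β), ih α h x)

/-- The positive transfinite oscillations `v_β f` of a real-valued function
(as `osc_β`, but with `f y - f x` in place of `|f y - f x|`). -/
noncomputable def vOrd (f : K → ℝ) (β : Ordinal) : K → EReal :=
  Ordinal.limitRecOn β (fun _ => (0 : EReal))
    (fun _ ih => uscEnv fun x =>
      limsup (fun y => ((f y - f x : ℝ) : EReal) + ih y) (𝓝 x))
    (fun β _ ih => uscEnv fun x => ⨆ (α : Ordinal) (h : α < β), ih α h x)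

/-- The `D(K)`-norm of a real function: the infimum of `sup_{x} Σ_j |φ_j x|` over all
pointwise representations `f = Σ_j φ_j` with `φ_j` continuous. -/
noncomputable def DNorm (f : K → ℝ) : ℝ :=
  sInf {M : ℝ | ∃ φ : ℕ → K → ℝ, (∀ j, Continuous (φ j)) ∧
    (∀ x, HasSum (fun j => φ j x) (f x)) ∧
    (∀ x, Summable fun j => |φ j x|) ∧ ∀ x, (∑' j, |φ j x|) ≤ M}

end DKdefs

section Aux
set_option linter.unusedSectionVars false
open TopologicalSpace
variable {K : Type*} [MetricSpace K] [CompactSpace K]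

lemma le_limsup_nhds (g : K → EReal) (x : K) : g x ≤ limsup g (𝓝 x) :=
  le_limsup_of_frequently_le
    (frequently_iff.2 fun hU => ⟨x, mem_of_mem_nhds hU, le_rfl⟩)

lemma limsup_le_of_usc {g : K → EReal} (hg : UpperSemicontinuous g) (x : K) :
    limsup g (𝓝 x) ≤ g x := by
  refine le_of_forall_gt_imp_ge_of_dense fun b hb => ?_
  exact limsup_le_of_le (by isBoundedDefault) ((hg x b hb).mono fun y hy => hy.le)

lemma coe_usc {h : K → ℝ} (hh : UpperSemicontinuous h) :
    UpperSemicontinuous fun y => ((h y : ℝ) : EReal) :=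
  continuous_coe_real_ereal.comp_upperSemicontinuous hh EReal.coe_strictMono.monotone

lemma limsup_le_usc_val {g : K → EReal} {h : K → ℝ} (hh : UpperSemicontinuous h)
    (hle : ∀ y, g y ≤ ((h y : ℝ) : EReal)) (x : K) :
    limsup g (𝓝 x) ≤ ((h x : ℝ) : EReal) :=
  le_trans (limsup_le_limsup (Eventually.of_forall hle))
    (limsup_le_of_usc (coe_usc hh) x)

lemma uscEnv_usc (g : K → EReal) : UpperSemicontinuous (uscEnv g) := by
  intro x b hb
  obtain ⟨c, hc1, hc2⟩ := exists_between hb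
  have hev : ∀ᶠ y in 𝓝 x, g y < c := eventually_lt_of_limsup_lt hc1
  rw [eventually_nhds_iff] at hev
  obtain ⟨U, hUg, hUo, hUx⟩ := hev
  refine Filter.eventually_of_mem (hUo.mem_nhds hUx) fun z hz => ?_
  have h2 : limsup g (𝓝 z) ≤ c :=
    limsup_le_of_le (by isBoundedDefault)
      (Filter.eventually_of_mem (hUo.mem_nhds hz) fun y hy => (hUg y hy).le)
  exact lt_of_le_of_lt h2 hc2

lemma lsc_neg_of_usc {h : K → ℝ} (hh : UpperSemicontinuous h) :
    LowerSemicontinuous fun x => -h x := by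
  intro x y hy
  have h1 : h x < -y := by
    have := hy; simp only at this; linarith
  exact (hh x _ h1).mono fun z hz => by simp only; linarith

lemma usc_const_sub {u : K → ℝ} (hu : LowerSemicontinuous u) (c : ℝ) :
    UpperSemicontinuous fun x => c - u x := by
  intro x y hy
  have h1 : c - y < u x := by simp only at hy; linarith
  exact (hu x _ h1).mono fun z hz => by simp only; linarith

lemma usc_max {h g : K → ℝ} (hh : UpperSemicontinuous h) (hg : UpperSemicontinuous g) :
    UpperSemicontinuous fun x => max (h x) (g x) := by
  intro x y hy
  simp only [max_lt_iff] at hy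
  filter_upwards [hh x y hy.1, hg x y hy.2] with z h1 h2
  simp only [max_lt_iff]
  exact ⟨h1, h2⟩

/-! Equation lemmas. -/

lemma oscOrd_zero (f : K → ℂ) : oscOrd f 0 = fun _ => 0 := by
  simp only [oscOrd]; rw [Ordinal.limitRecOn_zero]

lemma oscOrd_succ (f : K → ℂ) (β : Ordinal) :
    oscOrd f (Order.succ β) = uscEnv fun x =>
      limsup (fun y => ((‖f y - f x‖ : ℝ) : EReal) + oscOrd f β y) (𝓝 x) := by
  simp only [oscOrd]; rw [Ordinal.limitRecOn_succ]

lemma oscOrd_limit (f : K → ℂ) {β : Ordinal} (hβ : Order.IsSuccLimit β) :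
    oscOrd f β = uscEnv fun x => ⨆ (α : Ordinal) (_ : α < β), oscOrd f α x := by
  simp only [oscOrd]; rw [Ordinal.limitRecOn_limit _ _ _ _ hβ]

lemma vOrd_zero (g : K → ℝ) : vOrd g 0 = fun _ => 0 := by
  simp only [vOrd]; rw [Ordinal.limitRecOn_zero]

lemma vOrd_succ (g : K → ℝ) (β : Ordinal) :
    vOrd g (Order.succ β) = uscEnv fun x =>
      limsup (fun y => ((g y - g x : ℝ) : EReal) + vOrd g β y) (𝓝 x) := by
  simp only [vOrd]; rw [Ordinal.limitRecOn_succ]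

lemma vOrd_limit (g : K → ℝ) {β : Ordinal} (hβ : Order.IsSuccLimit β) :
    vOrd g β = uscEnv fun x => ⨆ (α : Ordinal) (_ : α < β), vOrd g α x := by
  simp only [vOrd]; rw [Ordinal.limitRecOn_limit _ _ _ _ hβ]

/-! Basic properties of `vOrd`. -/

lemma vOrd_usc (g : K → ℝ) (β : Ordinal) : UpperSemicontinuous (vOrd g β) := by
  rcases Ordinal.zero_or_succ_or_isSuccLimit β with h | ⟨α, rfl⟩ | h
  · rw [h, vOrd_zero]; exact upperSemicontinuous_const
  · rw [vOrd_succ]; exact uscEnv_usc _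
  · rw [vOrd_limit g h]; exact uscEnv_usc _

lemma vOrd_le_succ (g : K → ℝ) (β : Ordinal) (x : K) :
    vOrd g β x ≤ vOrd g (Order.succ β) x := by
  rw [vOrd_succ]
  simp only [uscEnv]
  refine le_trans ?_ (le_limsup_nhds _ x)
  have h1 := le_limsup_nhds (fun y => ((g y - g x : ℝ) : EReal) + vOrd g β y) x
  simpa using h1

lemma vOrd_mono (g : K → ℝ) (β : Ordinal) :
    ∀ α ≤ β, ∀ x, vOrd g α x ≤ vOrd g β x := by
  induction β using Ordinal.limitRecOn with
  | zero =>
    intro α hα x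
    rw [nonpos_iff_eq_zero.1 hα]
  | add_one β ih =>
    rw [Ordinal.add_one_eq_succ]
    intro α hα x
    rcases eq_or_lt_of_le hα with rfl | h
    · exact le_rfl
    · exact (ih α (Order.lt_succ_iff.1 h) x).trans (vOrd_le_succ g β x)
  | limit β hβ ih =>
    intro α hα x
    rcases eq_or_lt_of_le hα with rfl | h
    · exact le_rfl
    · rw [vOrd_limit g hβ]
      simp only [uscEnv]
      refine le_trans ?_ (le_limsup_nhds _ x)
      exact le_iSup₂ (f := fun (γ : Ordinal) (_ : γ < β) => vOrd g γ x) α h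

lemma vOrd_nonneg (g : K → ℝ) (β : Ordinal) (x : K) : 0 ≤ vOrd g β x := by
  have h0 : vOrd g 0 x = 0 := by rw [vOrd_zero]
  rw [← h0]
  exact vOrd_mono g β 0 (zero_le (a := β)) x

lemma vOrd_le_oscOrd {g : K → ℝ} {f : K → ℂ}
    (h : ∀ x y, g y - g x ≤ ‖f y - f x‖) (β : Ordinal) :
    ∀ x, vOrd g β x ≤ oscOrd f β x := by
  induction β using Ordinal.limitRecOn with
  | zero => intro x; rw [vOrd_zero, oscOrd_zero]
  | add_one β ih =>
    rw [Ordinal.add_one_eq_succ]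
    intro x
    rw [vOrd_succ, oscOrd_succ]
    simp only [uscEnv]
    refine limsup_le_limsup (Eventually.of_forall fun z => ?_)
    refine limsup_le_limsup (Eventually.of_forall fun y => ?_)
    exact add_le_add (EReal.coe_le_coe_iff.2 (h z y)) (ih y)
  | limit β hβ ih =>
    intro x
    rw [vOrd_limit g hβ, oscOrd_limit f hβ]
    simp only [uscEnv]
    refine limsup_le_limsup (Eventually.of_forall fun z => ?_)
    exact iSup₂_mono fun γ hγ => ih γ hγ z

/-! Forward direction: a representation bounds all oscillations. -/

lemma oscOrd_le_rep {f : K → ℂ} {u₁ u₂ u₃ u₄ : K → ℝ} {c : ℝ} {S : K → ℝ}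
    (hS : ∀ x, S x = ((c - u₁ x) + (c - u₂ x)) + ((c - u₃ x) + (c - u₄ x)))
    (h₁ : LowerSemicontinuous u₁) (h₂ : LowerSemicontinuous u₂)
    (h₃ : LowerSemicontinuous u₃) (h₄ : LowerSemicontinuous u₄)
    (hb : ∀ x, |u₁ x| ≤ c ∧ |u₂ x| ≤ c ∧ |u₃ x| ≤ c ∧ |u₄ x| ≤ c)
    (hrep : ∀ x, f x = ((u₁ x - u₂ x : ℝ) : ℂ) + Complex.I * ((u₃ x - u₄ x : ℝ) : ℂ))
    (β : Ordinal) :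
    ∀ x, oscOrd f β x ≤ ((S x : ℝ) : EReal) := by
  have hre : ∀ z, (f z).re = u₁ z - u₂ z := fun z => by rw [hrep z]; simp
  have him : ∀ z, (f z).im = u₃ z - u₄ z := fun z => by rw [hrep z]; simp
  have hSusc : UpperSemicontinuous S := by
    rw [show S = fun x => ((c - u₁ x) + (c - u₂ x)) + ((c - u₃ x) + (c - u₄ x)) from funext hS]
    exact ((usc_const_sub h₁ c).add (usc_const_sub h₂ c)).add
      ((usc_const_sub h₃ c).add (usc_const_sub h₄ c))
  induction β using Ordinal.limitRecOn with
  | zero =>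
    intro x
    rw [oscOrd_zero]
    have hx1 := (abs_le.1 (hb x).1).2
    have hx2 := (abs_le.1 (hb x).2.1).2
    have hx3 := (abs_le.1 (hb x).2.2.1).2
    have hx4 := (abs_le.1 (hb x).2.2.2).2
    have h0 : (0 : ℝ) ≤ S x := by rw [hS x]; linarith
    show (0 : EReal) ≤ ((S x : ℝ) : EReal)
    exact_mod_cast h0
  | add_one β ih =>
    rw [Ordinal.add_one_eq_succ]
    intro x
    rw [oscOrd_succ]
    simp only [uscEnv]
    refine limsup_le_usc_val hSusc (fun z => ?_) x
    -- goal : limsup (fun y => ↑(abs (f y - f z)) + oscOrd f β y) (𝓝 z) ≤ ↑(S z)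
    set HRe : K → ℝ := fun y =>
      max ((u₂ z - u₁ z) + ((c - u₂ y) + (c - u₂ y)))
          ((u₁ z - u₂ z) + ((c - u₁ y) + (c - u₁ y))) with hHRe
    set HIm : K → ℝ := fun y =>
      max ((u₄ z - u₃ z) + ((c - u₄ y) + (c - u₄ y)))
          ((u₃ z - u₄ z) + ((c - u₃ y) + (c - u₃ y))) with hHIm
    have huscH : UpperSemicontinuous fun y => HRe y + HIm y := by
      refine UpperSemicontinuous.add (usc_max ?_ ?_) (usc_max ?_ ?_)
      · exact upperSemicontinuous_const.add ((usc_const_sub h₂ c).add (usc_const_sub h₂ c))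
      · exact upperSemicontinuous_const.add ((usc_const_sub h₁ c).add (usc_const_sub h₁ c))
      · exact upperSemicontinuous_const.add ((usc_const_sub h₄ c).add (usc_const_sub h₄ c))
      · exact upperSemicontinuous_const.add ((usc_const_sub h₃ c).add (usc_const_sub h₃ c))
    have hmaj : ∀ y, ((‖f y - f z‖ : ℝ) : EReal) + oscOrd f β y ≤
        (((HRe y + HIm y : ℝ)) : EReal) := by
      intro y
      have ha := Complex.norm_le_abs_re_add_abs_im (f y - f z)
      have hRe : (f y - f z).re = (u₁ y - u₂ y) - (u₁ z - u₂ z) := by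
        rw [Complex.sub_re, hre, hre]
      have hIm : (f y - f z).im = (u₃ y - u₄ y) - (u₃ z - u₄ z) := by
        rw [Complex.sub_im, him, him]
      have hA : |(f y - f z).re| + ((c - u₁ y) + (c - u₂ y)) ≤ HRe y := by
        rcases abs_cases ((f y - f z).re) with ⟨h, _⟩ | ⟨h, _⟩
        · refine le_trans (le_of_eq ?_) (le_max_left _ _)
          rw [h, hRe]; ring
        · refine le_trans (le_of_eq ?_) (le_max_right _ _)
          rw [h, hRe]; ring
      have hC : |(f y - f z).im| + ((c - u₃ y) + (c - u₄ y)) ≤ HIm y := by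
        rcases abs_cases ((f y - f z).im) with ⟨h, _⟩ | ⟨h, _⟩
        · refine le_trans (le_of_eq ?_) (le_max_left _ _)
          rw [h, hIm]; ring
        · refine le_trans (le_of_eq ?_) (le_max_right _ _)
          rw [h, hIm]; ring
      have h2 : ‖f y - f z‖ + S y ≤ HRe y + HIm y := by
        rw [hS y]; linarith
      calc ((‖f y - f z‖ : ℝ) : EReal) + oscOrd f β y
          ≤ ((‖f y - f z‖ : ℝ) : EReal) + ((S y : ℝ) : EReal) :=
            add_le_add le_rfl (ih y)
        _ = (((‖f y - f z‖ + S y : ℝ)) : EReal) := (EReal.coe_add _ _).symm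
        _ ≤ (((HRe y + HIm y : ℝ)) : EReal) := EReal.coe_le_coe_iff.2 h2
    refine le_trans (limsup_le_usc_val huscH hmaj z) ?_
    refine EReal.coe_le_coe_iff.2 ?_
    have e1 : HRe z = (c - u₁ z) + (c - u₂ z) := by
      simp only [hHRe]
      rw [show (u₂ z - u₁ z) + ((c - u₂ z) + (c - u₂ z)) = (c - u₁ z) + (c - u₂ z) from by ring,
        show (u₁ z - u₂ z) + ((c - u₁ z) + (c - u₁ z)) = (c - u₁ z) + (c - u₂ z) from by ring,
        max_self]
    have e2 : HIm z = (c - u₃ z) + (c - u₄ z) := by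
      simp only [hHIm]
      rw [show (u₄ z - u₃ z) + ((c - u₄ z) + (c - u₄ z)) = (c - u₃ z) + (c - u₄ z) from by ring,
        show (u₃ z - u₄ z) + ((c - u₃ z) + (c - u₃ z)) = (c - u₃ z) + (c - u₄ z) from by ring,
        max_self]
    rw [e1, e2, hS z]
  | limit β hβ ih =>
    intro x
    rw [oscOrd_limit f hβ]
    simp only [uscEnv]
    refine limsup_le_usc_val hSusc (fun z => ?_) x
    exact iSup₂_le fun γ hγ => ih γ hγ z

/-! Backward direction: bounded positive oscillations imply membership in `D(K)` (real case). -/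

lemma memDKReal_of_v_bounded (g : K → ℝ) (hgb : ∃ M : ℝ, ∀ x, |g x| ≤ M)
    (hv : ∀ β : Ordinal, β < (Cardinal.aleph 1).ord →
      ∃ M : ℝ, ∀ x, vOrd g β x ≤ (M : EReal)) :
    MemDKReal g := by
  classical
  set ω₁ := (Cardinal.aleph 1).ord with hω
  have hω₁lim : Order.IsSuccLimit ω₁ := Cardinal.isSuccLimit_ord Cardinal.aleph0_lt_aleph_one.le
  let b : ℕ → Set K := fun n =>
    ((Encodable.decode (α := countableBasis K) n).elim ∅ fun s => (s : Set K))
  have hbmem : ∀ s ∈ countableBasis K, ∃ n, b n = s := fun s hs =>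
    ⟨Encodable.encode (⟨s, hs⟩ : countableBasis K), by simp [b, Encodable.encodek]⟩
  let P : Ordinal → ℚ × ℕ → Prop := fun α p =>
    ∀ x ∈ b p.2, vOrd g α x < (((p.1 : ℝ)) : EReal)
  have hPanti : ∀ {α β : Ordinal}, α ≤ β → ∀ p, P β p → P α p :=
    fun h p hp x hx => lt_of_le_of_lt (vOrd_mono g _ _ h x) (hp x hx)
  let d : ℚ × ℕ → Ordinal := fun p => sInf {α | α < ω₁ ∧ ¬ P α p}
  have hd : ∀ p, d p < ω₁ := by
    intro p
    by_cases hne : {α | α < ω₁ ∧ ¬ P α p}.Nonempty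
    · exact (csInf_mem hne).1
    · have : d p = sInf (∅ : Set Ordinal) := by
        simp only [d]; rw [Set.not_nonempty_iff_eq_empty.1 hne]
      rw [this, Ordinal.sInf_empty]
      exact hω₁lim.pos
  let β₀ : Ordinal := ⨆ p, d p
  have hβ₀ : β₀ < ω₁ := by
    refine Ordinal.iSup_lt_ord_lift ?_ hd
    rw [Cardinal.isRegular_aleph_one.cof_eq]
    exact lt_of_le_of_lt (Cardinal.lift_le_aleph0.2 Cardinal.mk_le_aleph0)
      Cardinal.aleph0_lt_aleph_one
  have hdle : ∀ p, d p ≤ β₀ := by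
    intro p
    refine le_ciSup ⟨ω₁, ?_⟩ p
    rintro o ⟨p', rfl⟩
    exact (hd p').le
  have hstab : ∀ x, vOrd g (Order.succ β₀) x ≤ vOrd g β₀ x := by
    intro x
    by_contra hcon
    push_neg at hcon
    obtain ⟨q, hq1, hq2⟩ := EReal.exists_rat_btwn_of_lt hcon
    have hUopen : IsOpen {z | vOrd g β₀ z < (((q : ℝ)) : EReal)} :=
      (vOrd_usc g β₀).isOpen_preimage _
    obtain ⟨s, hsB, hxs, hsU⟩ :=
      (isBasis_countableBasis K).exists_subset_of_mem_open (show x ∈ _ from hq1) hUopen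
    obtain ⟨n, hn⟩ := hbmem s hsB
    have hPβ₀ : P β₀ (q, n) := by
      intro z hz
      exact hsU (by rwa [hn] at hz)
    have hPsucc : P (Order.succ β₀) (q, n) := by
      by_contra hnp
      have hmem : Order.succ β₀ ∈ {α | α < ω₁ ∧ ¬ P α (q, n)} :=
        ⟨hω₁lim.succ_lt hβ₀, hnp⟩
      have h1 : ¬ P (d (q, n)) (q, n) := (csInf_mem ⟨_, hmem⟩).2
      exact h1 (hPanti (hdle (q, n)) (q, n) hPβ₀)
    have := hPsucc x (by rw [hn]; exact hxs)
    exact absurd this (not_lt.2 hq2.le)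
  have hfixeq : ∀ x, vOrd g (Order.succ β₀) x = vOrd g β₀ x := fun x =>
    le_antisymm (hstab x) (vOrd_le_succ g β₀ x)
  obtain ⟨M, hM⟩ := hv β₀ hβ₀
  set V : K → EReal := vOrd g β₀ with hV
  have hVnn : ∀ x, 0 ≤ V x := vOrd_nonneg g β₀
  have hVnetop : ∀ x, V x ≠ ⊤ := fun x =>
    ne_of_lt (lt_of_le_of_lt (hM x) (EReal.coe_lt_top M))
  have hVnebot : ∀ x, V x ≠ ⊥ := fun x =>
    ne_of_gt (lt_of_lt_of_le EReal.bot_lt_zero (hVnn x))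
  set V' : K → ℝ := fun x => (V x).toReal with hV'def
  have hV' : ∀ x, ((V' x : ℝ) : EReal) = V x := fun x =>
    EReal.coe_toReal (hVnetop x) (hVnebot x)
  have hV'0 : ∀ x, 0 ≤ V' x := by
    intro x
    have h := hVnn x
    rw [← hV' x] at h
    exact_mod_cast h
  have hV'M : ∀ x, V' x ≤ M := by
    intro x
    have h := hM x
    rw [← hV' x] at h
    exact_mod_cast h
  have hV'usc : UpperSemicontinuous V' := by
    intro x r hr
    have h1 : V x < (((r : ℝ)) : EReal) := by
      rw [← hV' x]; exact_mod_cast hr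
    refine ((vOrd_usc g β₀) x _ h1).mono fun z hz => ?_
    have hz2 : V z < ((r : ℝ) : EReal) := hz
    rw [← hV' z] at hz2
    exact_mod_cast hz2
  have hfix : ∀ x, limsup (fun y => ((g y - g x : ℝ) : EReal) + vOrd g β₀ y) (𝓝 x) ≤
      vOrd g β₀ x := by
    intro x
    have h2 : limsup (fun y => ((g y - g x : ℝ) : EReal) + vOrd g β₀ y) (𝓝 x) ≤
        vOrd g (Order.succ β₀) x := by
      rw [vOrd_succ]
      simp only [uscEnv]
      exact le_limsup_nhds
        (fun z => limsup (fun y => ((g y - g z : ℝ) : EReal) + vOrd g β₀ y) (𝓝 z)) x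
    exact h2.trans (le_of_eq (hfixeq x))
  have hV'2 : ∀ y, ((V' y : ℝ) : EReal) = vOrd g β₀ y := hV'
  have hsusc : UpperSemicontinuous fun x => g x + V' x := by
    intro x r hr
    have heq : (fun y => ((g y - g x : ℝ) : EReal) + vOrd g β₀ y) =
        fun y => ((g y + V' y - g x : ℝ) : EReal) := by
      funext y
      rw [← hV'2 y, ← EReal.coe_add]
      exact congrArg _ (by ring)
    have key : limsup (fun y => ((g y + V' y - g x : ℝ) : EReal)) (𝓝 x) ≤
        ((g x + V' x - g x : ℝ) : EReal) := by
      rw [← heq]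
      refine le_trans (hfix x) ?_
      rw [← hV'2 x]
      refine EReal.coe_le_coe_iff.2 ?_
      linarith
    have h2 : ((g x + V' x - g x : ℝ) : EReal) < ((r - g x : ℝ) : EReal) := by
      refine EReal.coe_lt_coe_iff.2 ?_
      simp only at hr
      linarith
    have h3 := eventually_lt_of_limsup_lt (lt_of_le_of_lt key h2)
    refine h3.mono fun z hz => ?_
    have h4 : g z + V' z - g x < r - g x := EReal.coe_lt_coe_iff.1 hz
    simp only
    linarith
  obtain ⟨Mg, hMg⟩ := hgb
  refine ⟨fun x => -V' x, fun x => -(g x + V' x),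
    ⟨lsc_neg_of_usc hV'usc, max M 0, fun x => ?_⟩,
    ⟨lsc_neg_of_usc hsusc, Mg + max M 0, fun x => ?_⟩,
    fun x => by ring⟩
  · rw [abs_neg, abs_of_nonneg (hV'0 x)]
    exact le_trans (hV'M x) (le_max_left M 0)
  · rw [abs_neg]
    refine le_trans (abs_add_le _ _) ?_
    have h5 : |V' x| ≤ max M 0 := by
      rw [abs_of_nonneg (hV'0 x)]
      exact le_trans (hV'M x) (le_max_left M 0)
    have := hMg x
    linarith

end Aux

/-- A bounded `f : K → ℂ` is in `D(K)` iff `osc_α f` is a bounded function for every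
countable ordinal `α`. -/
theorem memDK_iff_oscOrd_bounded {K : Type*} [MetricSpace K] [CompactSpace K]
    (f : K → ℂ) (hf : ∃ M : ℝ, ∀ x, ‖f x‖ ≤ M) :
    MemDK f ↔
      ∀ α : Ordinal, α < (Cardinal.aleph 1).ord →
        ∃ M : ℝ, ∀ x, oscOrd f α x ≤ (M : EReal) := by
  constructor
  · rintro ⟨u₁, u₂, u₃, u₄, ⟨h₁, M₁, hM₁⟩, ⟨h₂, M₂, hM₂⟩, ⟨h₃, M₃, hM₃⟩, ⟨h₄, M₄, hM₄⟩, hrep⟩ α _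
    set c := max (max M₁ M₂) (max M₃ M₄) with hc
    have hb : ∀ x, |u₁ x| ≤ c ∧ |u₂ x| ≤ c ∧ |u₃ x| ≤ c ∧ |u₄ x| ≤ c := fun x =>
      ⟨(hM₁ x).trans ((le_max_left M₁ M₂).trans (le_max_left _ _)),
       (hM₂ x).trans ((le_max_right M₁ M₂).trans (le_max_left _ _)),
       (hM₃ x).trans ((le_max_left M₃ M₄).trans (le_max_right _ _)),
       (hM₄ x).trans ((le_max_right M₃ M₄).trans (le_max_right _ _))⟩
    refine ⟨8 * c, fun x => ?_⟩
    have h := oscOrd_le_rep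
      (S := fun x => ((c - u₁ x) + (c - u₂ x)) + ((c - u₃ x) + (c - u₄ x)))
      (fun _ => rfl) h₁ h₂ h₃ h₄ hb hrep α x
    refine le_trans h (EReal.coe_le_coe_iff.2 ?_)
    obtain ⟨b1, b2, b3, b4⟩ := hb x
    have e1 := abs_le.1 b1
    have e2 := abs_le.1 b2
    have e3 := abs_le.1 b3
    have e4 := abs_le.1 b4
    linarith [e1.1, e2.1, e3.1, e4.1]
  · intro H
    obtain ⟨Mf, hMf⟩ := hf
    have hre : MemDKReal (fun x => (f x).re) := by
      refine memDKReal_of_v_bounded _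
        ⟨Mf, fun x => le_trans (Complex.abs_re_le_norm _) (hMf x)⟩ ?_
      intro β hβ
      obtain ⟨M, hM⟩ := H β hβ
      refine ⟨M, fun x => le_trans (vOrd_le_oscOrd (f := f) (fun x y => ?_) β x) (hM x)⟩
      show (f y).re - (f x).re ≤ ‖f y - f x‖
      rw [← Complex.sub_re]
      exact Complex.re_le_norm _
    have him : MemDKReal (fun x => (f x).im) := by
      refine memDKReal_of_v_bounded _
        ⟨Mf, fun x => le_trans (Complex.abs_im_le_norm _) (hMf x)⟩ ?_
      intro β hβ
      obtain ⟨M, hM⟩ := H β hβ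
      refine ⟨M, fun x => le_trans (vOrd_le_oscOrd (f := f) (fun x y => ?_) β x) (hM x)⟩
      show (f y).im - (f x).im ≤ ‖f y - f x‖
      rw [← Complex.sub_im]
      exact le_trans (le_abs_self _) (Complex.abs_im_le_norm _)
    obtain ⟨a₁, a₂, ha₁, ha₂, hra⟩ := hre
    obtain ⟨a₃, a₄, ha₃, ha₄, hrb⟩ := him
    refine ⟨a₁, a₂, a₃, a₄, ha₁, ha₂, ha₃, ha₄, fun x => ?_⟩
    have e1 : a₁ x - a₂ x = (f x).re := (hra x).symm
    have e2 : a₃ x - a₄ x = (f x).im := (hrb x).symm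
    rw [e1, e2, mul_comm Complex.I]
    exact (Complex.re_add_im (f x)).symm
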